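/- The β-component of the score function of the generalized Heckman model has conditional mean zero given selection: ∫_{-∞}^{∞} [ z(y) − (ρ/√(1 − ρ²)) φ(ζ(y))/Φ(ζ(y)) ] · (1/(σ Φ(μ₂))) φ(z(y)) Φ(ζ(y)) dy = 0. -/

import Mathlib

open MeasureTheory Set Filter

/-- Standard normal density. -/
noncomputable def phi (t : ℝ) : ℝ := Real.exp (-(t ^ 2) / 2) / Real.sqrt (2 * Real.pi)

/-- Standard normal cumulative distribution function. -/
noncomputable def Phi (x : ℝ) : ℝ := ∫ t in Set.Iic x, phi t

lemma phi_pos (t : ℝ) : 0 < phi t :=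
  div_pos (Real.exp_pos _) (Real.sqrt_pos.mpr (by positivity))

lemma phi_le_one (t : ℝ) : phi t ≤ 1 := by
  have h1 : Real.exp (-(t ^ 2) / 2) ≤ 1 := by
    rw [Real.exp_le_one_iff]; nlinarith [sq_nonneg t]
  have h2 : (1 : ℝ) ≤ Real.sqrt (2 * Real.pi) := by
    rw [show (1:ℝ) = Real.sqrt 1 by simp]
    exact Real.sqrt_le_sqrt (by nlinarith [Real.pi_gt_three])
  calc phi t ≤ 1 / Real.sqrt (2 * Real.pi) := by
        unfold phi
        exact div_le_div_of_nonneg_right h1 (by positivity) |>.trans_eq rfl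
    _ ≤ 1 := by rw [div_le_one (by positivity)]; exact h2

lemma phi_continuous : Continuous phi := by
  unfold phi; fun_prop

lemma phi_eq (t : ℝ) : phi t = Real.exp (-(1/2) * t ^ 2) * (Real.sqrt (2 * Real.pi))⁻¹ := by
  unfold phi; rw [div_eq_mul_inv]; ring_nf

lemma integrable_phi : Integrable phi := by
  have := (integrable_exp_neg_mul_sq (by norm_num : (0:ℝ) < 1/2)).mul_const
    (Real.sqrt (2 * Real.pi))⁻¹
  exact this.congr (by filter_upwards with t using (phi_eq t).symm)

lemma integral_phi : ∫ t, phi t = 1 := by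
  have h : ∫ t, phi t = (∫ t, Real.exp (-(1/2) * t ^ 2)) * (Real.sqrt (2 * Real.pi))⁻¹ := by
    simp_rw [phi_eq]
    exact integral_mul_const _ _
  rw [h, integral_gaussian]
  rw [show Real.pi / (1/2) = 2 * Real.pi by ring]
  rw [mul_inv_cancel₀ (by positivity)]

lemma Phi_pos (x : ℝ) : 0 < Phi x := by
  unfold Phi
  rw [setIntegral_pos_iff_support_of_nonneg_ae
    (Filter.Eventually.of_forall fun t => (phi_pos t).le) integrable_phi.integrableOn]
  have : Function.support phi ∩ Iic x = Iic x := by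
    rw [inter_eq_right]
    intro t _
    exact (phi_pos t).ne'
  rw [this]
  simp [Real.volume_Iic]

lemma Phi_le_one (x : ℝ) : Phi x ≤ 1 := by
  rw [← integral_phi]
  exact setIntegral_le_integral integrable_phi
    (Filter.Eventually.of_forall fun t => (phi_pos t).le)

lemma hasDerivAt_Phi (x : ℝ) : HasDerivAt Phi (phi x) x := by
  have key : ∀ u : ℝ, Phi u = Phi 0 + ∫ t in (0:ℝ)..u, phi t := by
    intro u
    rw [← intervalIntegral.integral_Iic_sub_Iic integrable_phi.integrableOn
      integrable_phi.integrableOn]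
    unfold Phi; ring
  have h : HasDerivAt (fun u : ℝ => Phi 0 + ∫ t in (0:ℝ)..u, phi t) (phi x) x :=
    (intervalIntegral.integral_hasDerivAt_right
      integrable_phi.intervalIntegrable
      (phi_continuous.stronglyMeasurableAtFilter _ _)
      phi_continuous.continuousAt).const_add _
  rwa [show (fun u : ℝ => Phi 0 + ∫ t in (0:ℝ)..u, phi t) = Phi from
    funext fun u => (key u).symm] at h

lemma hasDerivAt_phi (t : ℝ) : HasDerivAt phi (-t * phi t) t := by
  have h1 : HasDerivAt (fun u : ℝ => -(u ^ 2) / 2) (-t) t := by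
    have h := ((hasDerivAt_pow 2 t).neg).div_const 2
    refine h.congr_deriv ?_
    push_cast
    ring
  have h2 := (h1.exp).div_const (Real.sqrt (2 * Real.pi))
  have h3 : -t * phi t = Real.exp (-(t^2)/2) * (-t) / Real.sqrt (2 * Real.pi) := by
    unfold phi; ring
  rw [h3]
  exact h2

lemma phi_tendsto_atTop : Tendsto phi atTop (nhds 0) := by
  have h1 : Tendsto (fun t : ℝ => -(t ^ 2) / 2) atTop atBot :=
    Tendsto.atBot_div_const (by norm_num)
      (tendsto_neg_atTop_atBot.comp (tendsto_pow_atTop two_ne_zero))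
  have h2 : Tendsto (fun t : ℝ => Real.exp (-(t ^ 2) / 2)) atTop (nhds 0) :=
    Real.tendsto_exp_atBot.comp h1
  have h3 := h2.div_const (Real.sqrt (2 * Real.pi))
  rw [zero_div] at h3
  exact h3

lemma phi_tendsto_atBot : Tendsto phi atBot (nhds 0) := by
  have hsq : Tendsto (fun t : ℝ => t ^ 2) atBot atTop := by
    have h := (tendsto_pow_atTop (n := 2) two_ne_zero).comp
      (tendsto_neg_atBot_atTop (G := ℝ))
    exact h.congr (fun t => by simp [Function.comp, neg_sq])
  have h1 : Tendsto (fun t : ℝ => -(t ^ 2) / 2) atBot atBot :=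
    Tendsto.atBot_div_const (by norm_num) (tendsto_neg_atTop_atBot.comp hsq)
  have h2 : Tendsto (fun t : ℝ => Real.exp (-(t ^ 2) / 2)) atBot (nhds 0) :=
    Real.tendsto_exp_atBot.comp h1
  have h3 := h2.div_const (Real.sqrt (2 * Real.pi))
  rw [zero_div] at h3
  exact h3

theorem GH_beta_score_conditional_mean_zero (μ₁ μ₂ σ ρ : ℝ) (hσ : 0 < σ) (hρ₁ : -1 < ρ) (hρ₂ : ρ < 1)
    (z ζ : ℝ → ℝ)
    (hz : ∀ y, z y = (y - μ₁) / σ)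
    (hζ : ∀ y, ζ y = (μ₂ + ρ * z y) / Real.sqrt (1 - ρ ^ 2)) :
    (∫ y : ℝ, (z y - (ρ / Real.sqrt (1 - ρ ^ 2)) * (phi (ζ y) / Phi (ζ y)))
        * ((1 / (σ * Phi μ₂)) * phi (z y) * Phi (ζ y))) = 0 := by
  have hz' : z = fun y => (y - μ₁) / σ := funext hz
  have hζ' : ζ = fun y => (μ₂ + ρ * z y) / Real.sqrt (1 - ρ ^ 2) := funext hζ
  subst hζ' hz'
  set s : ℝ := Real.sqrt (1 - ρ ^ 2) with hs
  have hs0 : 0 < s := Real.sqrt_pos.mpr (by nlinarith)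
  set c : ℝ := ρ / s with hc
  set z : ℝ → ℝ := fun y => (y - μ₁) / σ with hzdef
  set ζ : ℝ → ℝ := fun y => (μ₂ + ρ * z y) / s with hζdef
  set F : ℝ → ℝ := fun y => phi (z y) * Phi (ζ y) with hF
  set F' : ℝ → ℝ := fun y => -(1/σ) * (z y * phi (z y) * Phi (ζ y) - c * phi (z y) * phi (ζ y))
    with hF'
  -- derivatives
  have hzd : ∀ y, HasDerivAt z (1/σ) y := fun y => by
    simpa using ((hasDerivAt_id y).sub_const μ₁).div_const σ
  have hζd : ∀ y, HasDerivAt ζ (ρ * (1/σ) / s) y := fun y =>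
    (((hzd y).const_mul ρ).const_add μ₂).div_const s
  have hFd : ∀ y, HasDerivAt F (F' y) y := by
    intro y
    have h1 : HasDerivAt (fun y => phi (z y)) (-(z y) * phi (z y) * (1/σ)) y :=
      (hasDerivAt_phi (z y)).comp y (hzd y)
    have h2 : HasDerivAt (fun y => Phi (ζ y)) (phi (ζ y) * (ρ * (1/σ) / s)) y :=
      (hasDerivAt_Phi (ζ y)).comp y (hζd y)
    have := h1.mul h2
    refine this.congr_deriv ?_
    rw [hF', hc]
    field_simp
    ring
  -- continuity of F'
  have hPhiCont : Continuous Phi :=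
    continuous_iff_continuousAt.mpr fun x => (hasDerivAt_Phi x).continuousAt
  have hzc : Continuous z := by fun_prop
  have hζc : Continuous ζ := by fun_prop
  have hF'c : Continuous F' := by
    rw [hF']
    exact continuous_const.mul
      (((hzc.mul (phi_continuous.comp hzc)).mul (hPhiCont.comp hζc)).sub
        ((continuous_const.mul (phi_continuous.comp hzc)).mul (phi_continuous.comp hζc)))
  -- integrability of F'
  have hb : (0:ℝ) < 1/(2*σ^2) := by positivity
  set b : ℝ := 1/(2*σ^2) with hbdef
  have hexp : ∀ y : ℝ, -(((y - μ₁)/σ) ^ 2)/2 = -b * (y - μ₁)^2 := by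
    intro y
    rw [hbdef, div_pow]
    ring
  have hphiz : ∀ y, phi (z y) = Real.exp (-b * (y - μ₁)^2) / Real.sqrt (2 * Real.pi) := by
    intro y
    show phi ((y - μ₁)/σ) = _
    unfold phi
    rw [hexp y]
  set h : ℝ → ℝ := fun t => (1/σ) * ((|t|/σ + |c|) * (Real.exp (-b * t^2) / Real.sqrt (2 * Real.pi)))
    with hhdef
  have hInt : Integrable h := by
    have A : Integrable (fun t : ℝ => |t| * Real.exp (-b * t^2)) := by
      have := (integrable_mul_exp_neg_mul_sq hb).abs
      exact this.congr (by
        filter_upwards with t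
        rw [abs_mul, abs_of_pos (Real.exp_pos _)])
    have B : Integrable (fun t : ℝ => Real.exp (-b * t^2)) := integrable_exp_neg_mul_sq hb
    have := (A.const_mul ((1/σ) * (1/σ) * (Real.sqrt (2 * Real.pi))⁻¹)).add
      (B.const_mul ((1/σ) * |c| * (Real.sqrt (2 * Real.pi))⁻¹))
    exact this.congr (by
      filter_upwards with t
      rw [hhdef]
      simp only [Pi.add_apply]
      field_simp)
  have hgInt : Integrable (fun y => h (y - μ₁)) := hInt.comp_sub_right μ₁
  have hbound : ∀ y, ‖F' y‖ ≤ h (y - μ₁) := by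
    intro y
    have hφ := phi_pos (z y)
    have hφζ := phi_pos (ζ y)
    have hΦ := Phi_pos (ζ y)
    have hΦ1 := Phi_le_one (ζ y)
    have hφζ1 := phi_le_one (ζ y)
    have habs : |z y * phi (z y) * Phi (ζ y) - c * phi (z y) * phi (ζ y)|
        ≤ (|z y| + |c|) * phi (z y) := by
      calc |z y * phi (z y) * Phi (ζ y) - c * phi (z y) * phi (ζ y)|
          ≤ |z y * phi (z y) * Phi (ζ y)| + |c * phi (z y) * phi (ζ y)| := abs_sub _ _
        _ = |z y| * phi (z y) * Phi (ζ y) + |c| * phi (z y) * phi (ζ y) := by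
            rw [abs_mul, abs_mul, abs_mul, abs_mul, abs_of_pos hφ, abs_of_pos hΦ,
              abs_of_pos hφζ]
        _ ≤ |z y| * phi (z y) * 1 + |c| * phi (z y) * 1 := by
            gcongr <;> positivity
        _ = (|z y| + |c|) * phi (z y) := by ring
    have hzabs : |z y| = |y - μ₁| / σ := by
      rw [hzdef, abs_div, abs_of_pos hσ]
    rw [hF', Real.norm_eq_abs, abs_mul, abs_neg, abs_of_pos (by positivity : (0:ℝ) < 1/σ)]
    rw [hhdef]
    have := mul_le_mul_of_nonneg_left habs (by positivity : (0:ℝ) ≤ 1/σ)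
    refine this.trans_eq ?_
    rw [hphiz y, hzabs]
  have hF'int : Integrable F' :=
    Integrable.mono' hgInt hF'c.aestronglyMeasurable (Filter.Eventually.of_forall hbound)
  -- limits of F
  have hFnonneg : ∀ y, 0 ≤ F y := fun y =>
    mul_nonneg (phi_pos _).le (Phi_pos _).le
  have hFle : ∀ y, F y ≤ phi (z y) :=
    fun y => mul_le_of_le_one_right (phi_pos _).le (Phi_le_one _)
  have hztop : Tendsto z atTop atTop := by
    rw [hzdef]
    apply Tendsto.atTop_div_const hσ
    exact tendsto_atTop_add_const_right _ (-μ₁) tendsto_id |>.congr (fun y => by simp only [id_eq]; ring)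
  have hzbot : Tendsto z atBot atBot := by
    rw [hzdef]
    apply Tendsto.atBot_div_const hσ
    exact tendsto_atBot_add_const_right _ (-μ₁) tendsto_id |>.congr (fun y => by simp only [id_eq]; ring)
  have hFtop : Tendsto F atTop (nhds 0) :=
    squeeze_zero hFnonneg hFle (phi_tendsto_atTop.comp hztop)
  have hFbot : Tendsto F atBot (nhds 0) :=
    squeeze_zero hFnonneg hFle (phi_tendsto_atBot.comp hzbot)
  -- integral of F' is zero
  have hIic : ∫ y in Iic (0:ℝ), F' y = F 0 - 0 :=
    integral_Iic_of_hasDerivAt_of_tendsto' (fun x _ => hFd x) hF'int.integrableOn hFbot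
  have hIoi : ∫ y in Ioi (0:ℝ), F' y = 0 - F 0 :=
    integral_Ioi_of_hasDerivAt_of_tendsto' (fun x _ => hFd x) hF'int.integrableOn hFtop
  have hIntF' : ∫ y, F' y = 0 := by
    rw [← intervalIntegral.integral_Iic_add_Ioi hF'int.integrableOn hF'int.integrableOn, hIic, hIoi]
    ring
  -- rewrite integrand
  have hEq : ∀ y : ℝ,
      (z y - (ρ / Real.sqrt (1 - ρ ^ 2)) * (phi (ζ y) / Phi (ζ y)))
        * ((1 / (σ * Phi μ₂)) * phi (z y) * Phi (ζ y))
      = (-(Phi μ₂)⁻¹) * F' y := by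
    intro y
    have hΦ : Phi (ζ y) ≠ 0 := (Phi_pos _).ne'
    have hΦμ : Phi μ₂ ≠ 0 := (Phi_pos _).ne'
    rw [hF', hc, ← hs]
    field_simp
  calc (∫ y : ℝ, (z y - (ρ / Real.sqrt (1 - ρ ^ 2)) * (phi (ζ y) / Phi (ζ y)))
        * ((1 / (σ * Phi μ₂)) * phi (z y) * Phi (ζ y)))
      = ∫ y : ℝ, (-(Phi μ₂)⁻¹) * F' y := by
        exact integral_congr_ae (Filter.Eventually.of_forall hEq)
    _ = (-(Phi μ₂)⁻¹) * ∫ y, F' y := integral_const_mul _ _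
    _ = 0 := by rw [hIntF']; ring
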